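/- There exists a continuous map f : [0,1] → [0,1] whose set of periods is {2^n : n ∈ ℕ} and whose set of accumulation points of periodic points is a single point (which is periodic). Hence the conclusion of Lemma 1 fails without the piecewise-monotonicity assumption. -/

import Mathlib

/-- The set of periodic points of `f` lying in `I`. -/
def periodicPts (f : ℝ → ℝ) (I : Set ℝ) : Set ℝ :=
  {x ∈ I | ∃ n : ℕ, 1 ≤ n ∧ f^[n] x = x}

/-- The set of least periods of periodic points of `f` in `I`. -/
def periodSet (f : ℝ → ℝ) (I : Set ℝ) : Set ℕ :=
  {n | 1 ≤ n ∧ ∃ x ∈ I, Function.minimalPeriod f x = n}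

open Set Filter Topology

noncomputable section

/-- The cascade of period-doubling maps. -/
def gmap : ℕ → ℝ → ℝ
  | 0 => fun _ => 0
  | n+1 => fun x =>
      if x ≤ 1/3 then x + 2/3
      else if x ≤ 2/3 then (2 - gmap n 0 / 3) + (gmap n 0 - 3) * x
      else gmap n (3*x - 2) / 3

lemma gmap_succ_def (n : ℕ) (x : ℝ) : gmap (n+1) x =
    if x ≤ 1/3 then x + 2/3
    else if x ≤ 2/3 then (2 - gmap n 0 / 3) + (gmap n 0 - 3) * x
    else gmap n (3*x - 2) / 3 := rfl

lemma gmap_succ_A {n : ℕ} {x : ℝ} (hx : x ≤ 1/3) : gmap (n+1) x = x + 2/3 := by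
  rw [gmap_succ_def, if_pos hx]

lemma gmap_succ_M {n : ℕ} {x : ℝ} (h1 : 1/3 ≤ x) (h2 : x ≤ 2/3) :
    gmap (n+1) x = (2 - gmap n 0 / 3) + (gmap n 0 - 3) * x := by
  rcases eq_or_lt_of_le h1 with h | h
  · rw [gmap_succ_def, if_pos (le_of_eq h.symm)]
    rw [← h]; ring
  · rw [gmap_succ_def, if_neg (not_le.2 h), if_pos h2]

lemma gmap_succ_B {n : ℕ} {x : ℝ} (h : 2/3 ≤ x) : gmap (n+1) x = gmap n (3*x - 2) / 3 := by
  rcases eq_or_lt_of_le h with h' | h'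
  · rw [gmap_succ_M (by linarith) (le_of_eq h'.symm), ← h']
    norm_num
    ring_nf
  · rw [gmap_succ_def, if_neg (by push_neg; linarith), if_neg (not_le.2 h')]

lemma gmap_mapsTo : ∀ n, MapsTo (gmap n) (Icc (0:ℝ) 1) (Icc (0:ℝ) 1) := by
  intro n
  induction n with
  | zero => intro x _; exact ⟨le_refl 0, zero_le_one⟩
  | succ n ih =>
    have hg0 : gmap n 0 ∈ Icc (0:ℝ) 1 := ih ⟨le_refl 0, zero_le_one⟩
    intro x hx
    rcases le_or_gt x (1/3) with h | h
    · rw [gmap_succ_A h]; constructor <;> [linarith [hx.1]; linarith]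
    rcases le_or_gt x (2/3) with h2 | h2
    · rw [gmap_succ_M h.le h2]
      obtain ⟨a, b⟩ := hg0
      constructor <;> nlinarith
    · rw [gmap_succ_B h2.le]
      have : gmap n (3*x - 2) ∈ Icc (0:ℝ) 1 := ih ⟨by linarith, by linarith [hx.2]⟩
      constructor <;> [linarith [this.1]; linarith [this.2]]

lemma gmap_zero_mem (n : ℕ) : gmap n 0 ∈ Icc (0:ℝ) 1 :=
  gmap_mapsTo n ⟨le_refl 0, zero_le_one⟩

lemma gmap_one (n : ℕ) : gmap n 1 = 0 := by
  induction n with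
  | zero => rfl
  | succ n ih =>
    rw [gmap_succ_B (by norm_num)]
    norm_num [ih]

lemma gmap_cont (n : ℕ) : Continuous (gmap n) := by
  induction n with
  | zero => exact continuous_const
  | succ n ih =>
    have : (gmap (n+1)) = fun x =>
        if x ≤ 1/3 then x + 2/3
        else if x ≤ 2/3 then (2 - gmap n 0 / 3) + (gmap n 0 - 3) * x
        else gmap n (3*x - 2) / 3 := rfl
    rw [this]
    apply Continuous.if_le
    · exact continuous_id.add continuous_const
    · apply Continuous.if_le
      · exact continuous_const.add (continuous_const.mul continuous_id)
      · exact ((ih.comp (by continuity)).div_const 3)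
      · exact continuous_id
      · exact continuous_const
      · intro x hx; rw [hx]; ring
    · exact continuous_id
    · exact continuous_const
    · intro x hx
      rw [hx]
      rw [if_pos (by norm_num : (1:ℝ)/3 ≤ 2/3)]
      ring


/-- iterates stay in `Icc 0 1`. -/
lemma gmap_iter_mem (n k : ℕ) {y : ℝ} (hy : y ∈ Icc (0:ℝ) 1) :
    (gmap n)^[k] y ∈ Icc (0:ℝ) 1 := by
  induction k with
  | zero => simpa
  | succ k ih => rw [Function.iterate_succ_apply']; exact gmap_mapsTo n ih

lemma gmap_iter_even (n k : ℕ) {y : ℝ} (hy : y ∈ Icc (0:ℝ) 1) :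
    (gmap (n+1))^[2*k] (y/3) = (gmap n)^[k] y / 3 := by
  induction k with
  | zero => simp
  | succ k ih =>
    have h1 : 2*(k+1) = 2 + 2*k := by ring
    rw [h1, Function.iterate_add_apply, ih]
    set z := (gmap n)^[k] y with hz
    have hzI : z ∈ Icc (0:ℝ) 1 := gmap_iter_mem n k hy
    have e1 : gmap (n+1) (z/3) = z/3 + 2/3 := gmap_succ_A (by linarith [hzI.2])
    have e2 : gmap (n+1) (z/3 + 2/3) = gmap n z / 3 := by
      rw [gmap_succ_B (by linarith [hzI.1])]
      norm_num
      ring_nf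
    show gmap (n+1) (gmap (n+1) (z/3)) = _
    rw [e1, e2, Function.iterate_succ_apply']

lemma gmap_iter_odd (n k : ℕ) {y : ℝ} (hy : y ∈ Icc (0:ℝ) 1) :
    (gmap (n+1))^[2*k+1] (y/3) = (gmap n)^[k] y / 3 + 2/3 := by
  rw [Function.iterate_succ_apply', gmap_iter_even n k hy]
  have hzI := gmap_iter_mem n k hy
  exact gmap_succ_A (by linarith [hzI.2])

/-- expansion lemma: a periodic orbit trapped in a region where `f` doubles distances is fixed. -/
lemma exp_fixed {f : ℝ → ℝ} {K : Set ℝ} {x : ℝ} {m : ℕ}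
    (haff : ∀ u ∈ K, ∀ v ∈ K, 2 * |u - v| ≤ |f u - f v|)
    (horb : ∀ k, f^[k] x ∈ K) (hm : 1 ≤ m) (hper : f^[m] x = x) : f x = x := by
  have key : ∀ k, 2^k * |x - f x| ≤ |f^[k] x - f^[k+1] x| := by
    intro k
    induction k with
    | zero => simp
    | succ k ih =>
      have h1 := haff _ (horb k) _ (horb (k+1))
      calc 2^(k+1) * |x - f x| = 2 * (2^k * |x - f x|) := by ring
        _ ≤ 2 * |f^[k] x - f^[k+1] x| := by linarith
        _ ≤ |f (f^[k] x) - f (f^[k+1] x)| := h1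
        _ = |f^[k+1] x - f^[k+2] x| := by
            rw [← Function.iterate_succ_apply' f k, ← Function.iterate_succ_apply' f (k+1)]
  have h2 := key m
  rw [hper] at h2
  have h3 : f^[m+1] x = f x := by
    rw [Function.iterate_succ_apply' f m, hper]
  rw [h3] at h2
  have h4 : (2:ℝ) ≤ 2^m := by
    calc (2:ℝ) = 2^1 := by norm_num
    _ ≤ 2^m := by apply pow_le_pow_right₀ (by norm_num) hm
  have h5 : |x - f x| ≤ 0 := by nlinarith [abs_nonneg (x - f x)]
  have h6 : |x - f x| = 0 := le_antisymm h5 (abs_nonneg _)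
  have := abs_eq_zero.1 h6
  linarith [this]

/-- the unique fixed point in the middle interval -/
def pval (n : ℕ) : ℝ := (2 - gmap n 0 / 3) / (4 - gmap n 0)

def ABset : Set ℝ := Icc (0:ℝ) (1/3) ∪ Icc (2/3) 1

lemma ABset_invar {n : ℕ} {x : ℝ} (hx : x ∈ ABset) : gmap (n+1) x ∈ ABset := by
  rcases hx with h | h
  · right
    rw [gmap_succ_A h.2]
    exact ⟨by linarith [h.1], by linarith [h.2]⟩
  · left
    rw [gmap_succ_B h.1]
    have := gmap_mapsTo n (⟨by linarith [h.1], by linarith [h.2]⟩ : (3*x-2) ∈ Icc (0:ℝ) 1)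
    exact ⟨by linarith [this.1], by linarith [this.2]⟩

lemma ABset_iter {n : ℕ} {x : ℝ} (hx : x ∈ ABset) (k : ℕ) : (gmap (n+1))^[k] x ∈ ABset := by
  induction k with
  | zero => simpa
  | succ k ih => rw [Function.iterate_succ_apply']; exact ABset_invar ih

lemma periodic_A_case {n : ℕ} {x : ℝ} (hx : x ∈ Icc (0:ℝ) (1/3))
    {m : ℕ} (hm : 1 ≤ m) (hper : (gmap (n+1))^[m] x = x) :
    3*x ∈ periodicPts (gmap n) (Icc 0 1) ∧ x = (3*x)/3 := by
  have hy : (3*x) ∈ Icc (0:ℝ) 1 := ⟨by linarith [hx.1], by linarith [hx.2]⟩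
  have hx3 : x = (3*x)/3 := by ring
  have h2m : (gmap (n+1))^[2*m] x = x := by
    have h : 2*m = m + m := by ring
    rw [h, Function.iterate_add_apply, hper, hper]
  rw [hx3] at h2m
  rw [gmap_iter_even n m hy] at h2m
  have : (gmap n)^[m] (3*x) = 3*x := by
    have := h2m
    field_simp at this
    linarith [this]
  exact ⟨⟨hy, m, hm, this⟩, hx3⟩

/-- classification of periodic points of the doubled map -/
lemma per_classify (n : ℕ) :
    periodicPts (gmap (n+1)) (Icc 0 1) ⊆
      {pval n} ∪ ((fun y => y/3) '' periodicPts (gmap n) (Icc 0 1))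
        ∪ ((fun y => 2/3 + y/3) '' periodicPts (gmap n) (Icc 0 1)) := by
  rintro x ⟨hxI, m, hm, hper⟩
  have hg0 := gmap_zero_mem n
  rcases le_or_gt x (1/3) with hA | h1
  · obtain ⟨hyper, hx3⟩ := periodic_A_case ⟨hxI.1, hA⟩ hm hper
    left; right
    exact ⟨3*x, hyper, hx3.symm⟩
  rcases lt_or_ge x (2/3) with h2 | hB
  · -- middle case: trapped in the middle, expansion
    left; left
    have horb : ∀ k, (gmap (n+1))^[k] x ∈ Icc (1/3:ℝ) (2/3) := by
      intro k
      have hIcc := gmap_iter_mem (n+1) k hxI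
      by_contra hk
      have hAB : (gmap (n+1))^[k] x ∈ ABset := by
        rcases le_or_gt ((gmap (n+1))^[k] x) (1/3) with h | h
        · exact Or.inl ⟨hIcc.1, h⟩
        rcases le_or_gt (2/3) ((gmap (n+1))^[k] x) with h' | h'
        · exact Or.inr ⟨h', hIcc.2⟩
        · exact absurd ⟨h.le, h'.le⟩ hk
      obtain ⟨j, hj⟩ : ∃ j, k ≤ j * m := ⟨k, Nat.le_mul_of_pos_right k hm⟩
      have hxAB : x ∈ ABset := by
        have hiter : (gmap (n+1))^[j*m] x = x := by
          clear hj
          induction j with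
          | zero => simp
          | succ j ihj =>
            have h : (j+1)*m = m + j*m := by ring
            rw [h, Function.iterate_add_apply, ihj, hper]
        have h5 : (gmap (n+1))^[j*m - k] ((gmap (n+1))^[k] x) = x := by
          rw [← Function.iterate_add_apply, Nat.sub_add_cancel hj, hiter]
        rw [← h5]
        exact ABset_iter hAB _
      rcases hxAB with h | h
      · linarith [h.2]
      · linarith [h.1]
    have haff : ∀ u ∈ Icc (1/3:ℝ) (2/3), ∀ v ∈ Icc (1/3:ℝ) (2/3),
        2 * |u - v| ≤ |gmap (n+1) u - gmap (n+1) v| := by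
      intro u hu v hv
      rw [gmap_succ_M hu.1 hu.2, gmap_succ_M hv.1 hv.2]
      have h : (2 - gmap n 0 / 3) + (gmap n 0 - 3) * u - ((2 - gmap n 0 / 3) + (gmap n 0 - 3) * v)
          = (gmap n 0 - 3) * (u - v) := by ring
      rw [h, abs_mul]
      have h6 : |gmap n 0 - 3| = 3 - gmap n 0 := by
        rw [abs_of_nonpos (by linarith [hg0.2])]; ring
      rw [h6]
      nlinarith [abs_nonneg (u - v), hg0.2]
    have hfix : gmap (n+1) x = x := exp_fixed haff horb hm hper
    rw [gmap_succ_M h1.le h2.le] at hfix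
    have h7 : (4:ℝ) - gmap n 0 ≠ 0 := by intro h; nlinarith [hg0.2]
    show x = pval n
    rw [pval]
    field_simp
    linarith [hfix]
  · -- B case
    right
    have hxB : x ∈ Icc (2/3:ℝ) 1 := ⟨hB, hxI.2⟩
    have h2m : (gmap (n+1))^[2*m] x = x := by
      have h : 2*m = m + m := by ring
      rw [h, Function.iterate_add_apply, hper, hper]
    set w := (gmap (n+1))^[2*m - 1] x with hw
    have hGw : gmap (n+1) w = x := by
      rw [hw, ← Function.iterate_succ_apply' (gmap (n+1)) (2*m-1) x]
      have h : 2*m - 1 + 1 = 2*m := by omega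
      rw [Nat.succ_eq_add_one, h, h2m]
    have hwAB : w ∈ ABset := ABset_iter (Or.inr hxB) _
    have hwA : w ∈ Icc (0:ℝ) (1/3) := by
      rcases hwAB with h | h
      · exact h
      · exfalso
        rw [gmap_succ_B h.1] at hGw
        have h8 := gmap_mapsTo n (⟨by linarith [h.1], by linarith [h.2]⟩ :
          (3*w-2) ∈ Icc (0:ℝ) 1)
        rw [← hGw] at hB
        linarith [h8.2]
    have hwper : (gmap (n+1))^[2*m] w = w := by
      have e1 : (gmap (n+1))^[2*m + (2*m-1)] x
          = (gmap (n+1))^[2*m] ((gmap (n+1))^[2*m-1] x) := Function.iterate_add_apply _ _ _ x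
      have e2 : (gmap (n+1))^[2*m-1 + 2*m] x
          = (gmap (n+1))^[2*m-1] ((gmap (n+1))^[2*m] x) := Function.iterate_add_apply _ _ _ x
      rw [h2m] at e2
      have e3 : 2*m + (2*m-1) = 2*m-1 + 2*m := by omega
      rw [hw, ← e1, e3, e2]
    obtain ⟨hyper, hw3⟩ := periodic_A_case hwA (by omega : 1 ≤ 2*m) hwper
    refine ⟨3*w, hyper, ?_⟩
    show 2/3 + (3*w)/3 = x
    rw [← hGw, gmap_succ_A hwA.2]
    ring

lemma per_zero_sub : periodicPts (gmap 0) (Icc 0 1) ⊆ {0} := by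
  rintro x ⟨hxI, m, hm, hper⟩
  obtain ⟨k, rfl⟩ : ∃ k, m = k + 1 := ⟨m-1, by omega⟩
  rw [Function.iterate_succ_apply'] at hper
  have : gmap 0 ((gmap 0)^[k] x) = 0 := rfl
  rw [this] at hper
  exact hper.symm ▸ rfl

lemma per_finite (n : ℕ) : (periodicPts (gmap n) (Icc 0 1)).Finite := by
  induction n with
  | zero => exact (Set.finite_singleton 0).subset per_zero_sub
  | succ n ih =>
    apply Set.Finite.subset _ (per_classify n)
    exact ((Set.finite_singleton _).union (ih.image _)).union (ih.image _)

lemma y3_per {n : ℕ} {y : ℝ} (hy : y ∈ periodicPts (gmap n) (Icc 0 1)) :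
    y/3 ∈ Function.periodicPts (gmap (n+1)) := by
  obtain ⟨hyI, m, hm, hp⟩ := hy
  exact ⟨2*m, by omega,
    show (gmap (n+1))^[2*m] (y/3) = y/3 by rw [gmap_iter_even n m hyI, hp]⟩

lemma minPeriod_double {n : ℕ} {y : ℝ} (hy : y ∈ Icc (0:ℝ) 1)
    (hper : y ∈ periodicPts (gmap n) (Icc 0 1)) :
    Function.minimalPeriod (gmap (n+1)) (y/3) = 2 * Function.minimalPeriod (gmap n) y := by
  obtain ⟨_, m0, hm0, hp0⟩ := hper
  have hyP : y ∈ Function.periodicPts (gmap n) := ⟨m0, by omega, hp0⟩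
  set m := Function.minimalPeriod (gmap n) y with hm
  have hmpos : 0 < m := Function.minimalPeriod_pos_of_mem_periodicPts hyP
  have hiter : (gmap n)^[m] y = y := Function.iterate_minimalPeriod
  have hP2m : Function.IsPeriodicPt (gmap (n+1)) (2*m) (y/3) := by
    show (gmap (n+1))^[2*m] (y/3) = y/3
    rw [gmap_iter_even n m hy, hiter]
  set m' := Function.minimalPeriod (gmap (n+1)) (y/3) with hm'
  have hdvd : m' ∣ 2*m := hP2m.minimalPeriod_dvd
  have hm'iter : (gmap (n+1))^[m'] (y/3) = y/3 := Function.iterate_minimalPeriod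
  have heven : m' % 2 = 0 := by
    by_contra hodd
    obtain ⟨t, ht⟩ : ∃ t, m' = 2*t+1 := ⟨m'/2, by omega⟩
    rw [ht, gmap_iter_odd n t hy] at hm'iter
    have h1 := (gmap_iter_mem n t hy).1
    have hy2 := hy.2
    linarith [hm'iter]
  obtain ⟨t, ht⟩ : ∃ t, m' = 2*t := ⟨m'/2, by omega⟩
  have ht1 : (gmap n)^[t] y = y := by
    rw [ht, gmap_iter_even n t hy] at hm'iter
    field_simp at hm'iter
    exact hm'iter
  have h2 : m ∣ t := Function.IsPeriodicPt.minimalPeriod_dvd ht1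
  have h3 : 2*m ∣ m' := by rw [ht]; exact Nat.mul_dvd_mul_left 2 h2
  exact Nat.dvd_antisymm hdvd h3

lemma zero_per (n : ℕ) : (0:ℝ) ∈ periodicPts (gmap n) (Icc 0 1) := by
  induction n with
  | zero => exact ⟨⟨le_refl 0, zero_le_one⟩, 1, le_refl 1, rfl⟩
  | succ n ih =>
    obtain ⟨hI, m, hm, hp⟩ := ih
    refine ⟨⟨le_refl 0, zero_le_one⟩, 2*m, by omega, ?_⟩
    have := gmap_iter_even n m (⟨le_refl 0, zero_le_one⟩ : (0:ℝ) ∈ Icc (0:ℝ) 1)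
    rw [zero_div] at this
    rw [this, hp, zero_div]

lemma minPeriod_zero (n : ℕ) : Function.minimalPeriod (gmap n) 0 = 2^n := by
  induction n with
  | zero =>
    rw [pow_zero, Function.minimalPeriod_eq_one_iff_isFixedPt]
    rfl
  | succ n ih =>
    have h := minPeriod_double (⟨le_refl 0, zero_le_one⟩ : (0:ℝ) ∈ Icc (0:ℝ) 1) (zero_per n)
    rw [zero_div] at h
    rw [h, ih]
    ring

lemma pval_mem (n : ℕ) : pval n ∈ Icc (1/3:ℝ) (2/3) := by
  have hg0 := gmap_zero_mem n
  rw [pval]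
  constructor
  · rw [le_div_iff₀ (by linarith [hg0.2])]
    nlinarith [hg0.1, hg0.2]
  · rw [div_le_iff₀ (by linarith [hg0.2])]
    nlinarith [hg0.1, hg0.2]

lemma pval_fixed (n : ℕ) : gmap (n+1) (pval n) = pval n := by
  have h := pval_mem n
  have hg0 := gmap_zero_mem n
  rw [gmap_succ_M h.1 h.2, pval]
  have h7 : (4:ℝ) - gmap n 0 ≠ 0 := by intro h'; nlinarith [hg0.2]
  field_simp
  ring

lemma per_pow (n : ℕ) : ∀ x ∈ periodicPts (gmap n) (Icc 0 1),
    ∃ k : ℕ, Function.minimalPeriod (gmap n) x = 2^k := by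
  induction n with
  | zero =>
    intro x hx
    have hx0 : x ∈ ({0}:Set ℝ) := per_zero_sub hx
    rw [Set.mem_singleton_iff] at hx0
    subst hx0
    refine ⟨0, ?_⟩
    rw [pow_zero, Function.minimalPeriod_eq_one_iff_isFixedPt]
    rfl
  | succ n ih =>
    intro x hx
    rcases per_classify n hx with (h | ⟨y, hy, rfl⟩) | ⟨y, hy, rfl⟩
    · rw [Set.mem_singleton_iff] at h
      subst h
      refine ⟨0, ?_⟩
      rw [pow_zero, Function.minimalPeriod_eq_one_iff_isFixedPt]
      exact pval_fixed n
    · obtain ⟨k, hk⟩ := ih y hy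
      exact ⟨k+1, by rw [minPeriod_double hy.1 hy, hk]; ring⟩
    · obtain ⟨k, hk⟩ := ih y hy
      have h1 : y/3 ∈ Function.periodicPts (gmap (n+1)) := y3_per hy
      have h2 : gmap (n+1) (y/3) = 2/3 + y/3 := by
        rw [gmap_succ_A (by linarith [hy.1.2] : y/3 ≤ 1/3)]
        ring
      refine ⟨k+1, ?_⟩
      show Function.minimalPeriod (gmap (n+1)) ((fun y => 2/3 + y/3) y) = 2^(k+1)
      simp only
      rw [← h2, Function.minimalPeriod_apply h1, minPeriod_double hy.1 hy, hk]
      ring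

/-! ### The global map -/

open scoped Classical

def rr (n : ℕ) : ℝ := (1/2)^n

lemma rr_pos (n : ℕ) : 0 < rr n := pow_pos (by norm_num) n

lemma rr_succ (n : ℕ) : rr (n+1) = rr n / 2 := by rw [rr, rr, pow_succ]; ring

lemma rr_le_one (n : ℕ) : rr n ≤ 1 := pow_le_one₀ (by norm_num) (by norm_num)

lemma rr_zero : rr 0 = 1 := rfl

lemma rr_mono {m n : ℕ} (h : m ≤ n) : rr n ≤ rr m :=
  pow_le_pow_of_le_one (by norm_num) (by norm_num) h

lemma rr_lt (n : ℕ) : rr (n+1) < rr n := by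
  rw [rr_succ]; linarith [rr_pos n]

/-- left endpoint of the buffer region at scale `n`. -/
def lb (n : ℕ) : ℝ := rr (n+1) + rr (n+2)

lemma lb_lt (n : ℕ) : lb n < rr n := by
  have h1 := rr_succ n
  have h2 := rr_succ (n+1)
  have := rr_pos (n+2)
  rw [lb]; linarith

lemma lb_gt (n : ℕ) : rr (n+1) < lb n := by
  have := rr_pos (n+2); rw [lb]; linarith

/-- scaled copy of `gmap n` on the interval `[rr (n+1), lb n]`. -/
def Jp (n : ℕ) (x : ℝ) : ℝ := rr (n+1) + rr (n+2) * gmap n ((x - rr (n+1)) / rr (n+2))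

/-- the value of the map at the right end of the buffer at scale `n`. -/
def bval : ℕ → ℝ
  | 0 => 1
  | n+1 => rr (n+1) + rr (n+2) * gmap n 0

lemma bval_ge (n : ℕ) : rr n ≤ bval n := by
  cases n with
  | zero => exact le_of_eq rr_zero
  | succ n =>
    have := (gmap_zero_mem n).1
    have := rr_pos (n+2)
    show rr (n+1) ≤ rr (n+1) + rr (n+2) * gmap n 0
    nlinarith

lemma bval_le (n : ℕ) : bval n ≤ rr n + rr (n+1) := by
  cases n with
  | zero => rw [bval, rr_zero]; have := rr_pos 1; linarith
  | succ n =>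
    have h := (gmap_zero_mem n).2
    have := rr_pos (n+2)
    show rr (n+1) + rr (n+2) * gmap n 0 ≤ rr (n+1) + rr (n+2)
    nlinarith

lemma bval_le_one (n : ℕ) : bval n ≤ 1 := by
  cases n with
  | zero => exact le_refl 1
  | succ n =>
    have h := bval_le (n+1)
    have h2 : rr (n+1) + rr (n+2) ≤ rr n := by
      have := rr_succ n; have := rr_succ (n+1); have := rr_pos (n+2); linarith
    calc bval (n+1) ≤ rr (n+1) + rr (n+2) := h
    _ ≤ rr n := h2
    _ ≤ 1 := rr_le_one n

/-- affine buffer map at scale `n`. -/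
def Bp (n : ℕ) (x : ℝ) : ℝ := rr (n+1) + (bval n - rr (n+1)) * ((x - lb n) / rr (n+2))

def piece (n : ℕ) (x : ℝ) : ℝ := if x ≤ lb n then Jp n x else Bp n x

lemma exists_rr {x : ℝ} (hx : 0 < x) : ∃ n, rr (n+1) < x := by
  obtain ⟨n, hn⟩ := exists_pow_lt_of_lt_one hx (by norm_num : (1/2:ℝ) < 1)
  exact ⟨n, lt_of_le_of_lt (rr_mono (Nat.le_succ n)) hn⟩

noncomputable def fmap (x : ℝ) : ℝ :=
  if hx : 0 < x ∧ x ≤ 1 then piece (Nat.find (exists_rr hx.1)) x else 0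

lemma fmap_eq_piece {n : ℕ} {x : ℝ} (h1 : rr (n+1) < x) (h2 : x ≤ rr n) :
    fmap x = piece n x := by
  have hx : 0 < x ∧ x ≤ 1 := ⟨lt_trans (rr_pos _) h1, le_trans h2 (rr_le_one n)⟩
  rw [fmap, dif_pos hx]
  congr 1
  rw [Nat.find_eq_iff]
  refine ⟨h1, fun m hm => not_lt.2 (le_trans h2 (rr_mono (by omega)))⟩

lemma fmap_zero : fmap 0 = 0 := by
  rw [fmap, dif_neg]; simp

/-- evaluation on a `J` interval, in conjugated form. -/
lemma fmap_conj (n : ℕ) {y : ℝ} (hy : y ∈ Icc (0:ℝ) 1) :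
    fmap (rr (n+1) + rr (n+2) * y) = rr (n+1) + rr (n+2) * gmap n y := by
  have hp2 := rr_pos (n+2)
  have hp1 := rr_pos (n+1)
  rcases eq_or_lt_of_le hy.1 with h0 | h0
  · -- y = 0 : the point is the left endpoint, handled by the next piece's buffer
    rw [← h0]
    have hx : rr (n+2) < rr (n+1) + rr (n+2) * 0 := by
      rw [mul_zero, add_zero]; exact rr_lt (n+1)
    have hx2 : rr (n+1) + rr (n+2) * 0 ≤ rr (n+1) := by rw [mul_zero, add_zero]
    rw [fmap_eq_piece hx hx2]
    rw [mul_zero, add_zero]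
    have hnb : ¬ (rr (n+1) ≤ lb (n+1)) := by
      push_neg
      rw [lb]
      have h2 := rr_succ (n+1); have h3 := rr_succ (n+2); have := rr_pos (n+3)
      linarith
    rw [piece, if_neg hnb, Bp]
    have harg : (rr (n+1) - lb (n+1)) / rr (n+3) = 1 := by
      rw [lb]
      have h2 := rr_succ (n+1); have h3 := rr_succ (n+2)
      have := rr_pos (n+3)
      field_simp
      linarith
    rw [harg]
    show rr (n+2) + (bval (n+1) - rr (n+2)) * 1 = _
    have : bval (n+1) = rr (n+1) + rr (n+2) * gmap n 0 := rfl
    rw [this]; ring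
  · -- y > 0 : interior of the J interval
    set x := rr (n+1) + rr (n+2) * y with hxdef
    have hx1 : rr (n+1) < x := by rw [hxdef]; nlinarith
    have hx2 : x ≤ rr n := by
      have h2 := rr_succ n; have h3 := rr_succ (n+1)
      rw [hxdef]; nlinarith [hy.2]
    rw [fmap_eq_piece hx1 hx2]
    have hxl : x ≤ lb n := by rw [hxdef, lb]; nlinarith [hy.2]
    rw [piece, if_pos hxl, Jp]
    have harg : (x - rr (n+1)) / rr (n+2) = y := by
      rw [hxdef]; field_simp; ring
    rw [harg]

lemma fmap_conj_iter (n : ℕ) {y : ℝ} (hy : y ∈ Icc (0:ℝ) 1) (k : ℕ) :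
    fmap^[k] (rr (n+1) + rr (n+2) * y) = rr (n+1) + rr (n+2) * (gmap n)^[k] y := by
  induction k with
  | zero => simp
  | succ k ih =>
    rw [Function.iterate_succ_apply', ih, Function.iterate_succ_apply',
      fmap_conj n (gmap_iter_mem n k hy)]

lemma Jp_cont (n : ℕ) : Continuous (Jp n) := by
  apply continuous_const.add (continuous_const.mul ((gmap_cont n).comp _))
  exact (continuous_id.sub continuous_const).div_const _

lemma Bp_cont (n : ℕ) : Continuous (Bp n) := by
  apply continuous_const.add (continuous_const.mul _)
  exact (continuous_id.sub continuous_const).div_const _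

lemma Jp_lb (n : ℕ) : Jp n (lb n) = rr (n+1) := by
  rw [Jp, lb]
  have h : (rr (n+1) + rr (n+2) - rr (n+1)) / rr (n+2) = 1 := by
    rw [add_sub_cancel_left, div_self (rr_pos (n+2)).ne']
  rw [h, gmap_one, mul_zero, add_zero]

lemma Jp_left (n : ℕ) : Jp n (rr (n+1)) = rr (n+1) + rr (n+2) * gmap n 0 := by
  rw [Jp, sub_self, zero_div]

lemma Bp_lb (n : ℕ) : Bp n (lb n) = rr (n+1) := by
  rw [Bp, sub_self, zero_div, mul_zero, add_zero]

lemma piece_cont (n : ℕ) : Continuous (piece n) := by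
  unfold piece
  apply Continuous.if_le (Jp_cont n) (Bp_cont n) continuous_id continuous_const
  intro x hx
  simp only [id_eq] at hx
  rw [hx, Jp_lb, Bp_lb]

lemma fmap_boundary (n : ℕ) : fmap (rr (n+1)) = rr (n+1) + rr (n+2) * gmap n 0 := by
  have h := fmap_conj n (⟨le_refl 0, zero_le_one⟩ : (0:ℝ) ∈ Icc (0:ℝ) 1)
  simpa using h

lemma piece_match (n : ℕ) : piece (n+1) (rr (n+1)) = piece n (rr (n+1)) := by
  have e1 : fmap (rr (n+1)) = piece (n+1) (rr (n+1)) := fmap_eq_piece (rr_lt (n+1)) (le_refl _)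
  have e2 : piece n (rr (n+1)) = rr (n+1) + rr (n+2) * gmap n 0 := by
    rw [piece, if_pos (lb_gt n).le, Jp_left]
  rw [← e1, fmap_boundary n, e2]

lemma cont_at_interior {n : ℕ} {x : ℝ} (h1 : rr (n+1) < x) (h2 : x < rr n) :
    ContinuousAt fmap x := by
  apply (piece_cont n).continuousAt.congr
  apply Filter.eventuallyEq_of_mem (Ioo_mem_nhds h1 h2)
  intro y hy
  exact (fmap_eq_piece hy.1 hy.2.le).symm

lemma cont_at_boundary (n : ℕ) : ContinuousAt fmap (rr (n+1)) := by
  have hcont : Continuous (fun y => if y ≤ rr (n+1) then piece (n+1) y else piece n y) := by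
    apply Continuous.if_le (piece_cont (n+1)) (piece_cont n) continuous_id continuous_const
    intro y hy
    simp only [id_eq] at hy
    rw [hy]
    exact piece_match n
  apply hcont.continuousAt.congr
  apply Filter.eventuallyEq_of_mem (Ioo_mem_nhds (rr_lt (n+1)) (rr_lt n))
  intro y hy
  show (if y ≤ rr (n+1) then piece (n+1) y else piece n y) = fmap y
  by_cases h : y ≤ rr (n+1)
  · rw [if_pos h]
    exact (fmap_eq_piece hy.1 h).symm
  · rw [if_neg h]
    exact (fmap_eq_piece (not_le.1 h) hy.2.le).symm

lemma exists_region {x : ℝ} (h0 : 0 < x) (h1 : x ≤ 1) : ∃ n, rr (n+1) < x ∧ x ≤ rr n := by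
  set n := Nat.find (exists_rr h0) with hn
  refine ⟨n, Nat.find_spec (exists_rr h0), ?_⟩
  cases hcase : n with
  | zero => rw [← rr_zero] at h1; exact h1
  | succ m =>
    have := Nat.find_min (exists_rr h0) (by omega : m < n)
    rw [hcase] at *
    exact not_lt.1 this

lemma Jp_mem {n : ℕ} {x : ℝ} (hx : x ∈ Icc (rr (n+1)) (lb n)) :
    Jp n x ∈ Icc (rr (n+1)) (lb n) := by
  have hp := rr_pos (n+2)
  have harg : (x - rr (n+1)) / rr (n+2) ∈ Icc (0:ℝ) 1 := by
    constructor
    · apply div_nonneg (by linarith [hx.1]) hp.le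
    · rw [div_le_one hp]
      have := hx.2; rw [lb] at this; linarith
  have hg := gmap_mapsTo n harg
  rw [lb]
  constructor
  · show rr (n+1) ≤ Jp n x
    rw [Jp]; nlinarith [hg.1]
  · show Jp n x ≤ rr (n+1) + rr (n+2)
    rw [Jp]; nlinarith [hg.2]

lemma Bp_mem {n : ℕ} {x : ℝ} (hx : x ∈ Icc (lb n) (rr n)) :
    Bp n x ∈ Icc (rr (n+1)) (bval n) := by
  have hp := rr_pos (n+2)
  have hd : rr n - lb n = rr (n+2) := by
    rw [lb]; have := rr_succ n; have := rr_succ (n+1); linarith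
  have harg : (x - lb n) / rr (n+2) ∈ Icc (0:ℝ) 1 := by
    constructor
    · apply div_nonneg (by linarith [hx.1]) hp.le
    · rw [div_le_one hp]; linarith [hx.2]
  have hcoef : 0 ≤ bval n - rr (n+1) := by
    have h1 := bval_ge n
    have h2 := rr_lt n
    linarith
  rw [Bp]
  constructor
  · nlinarith [harg.1]
  · nlinarith [harg.2]

lemma fmap_bounds {x : ℝ} (h0 : 0 < x) (h1 : x ≤ 1) :
    fmap x ∈ Icc (0:ℝ) 1 ∧ fmap x ≤ 3 * x := by
  obtain ⟨n, hn1, hn2⟩ := exists_region h0 h1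
  rw [fmap_eq_piece hn1 hn2]
  have hrn : rr n < 2 * x := by
    have := rr_succ n; linarith
  have hp1 := rr_pos (n+1)
  rw [piece]
  by_cases h : x ≤ lb n
  · rw [if_pos h]
    have := Jp_mem ⟨hn1.le, h⟩
    have hlb := lb_lt n
    refine ⟨⟨by linarith [this.1], ?_⟩, ?_⟩
    · calc Jp n x ≤ lb n := this.2
      _ ≤ rr n := (lb_lt n).le
      _ ≤ 1 := rr_le_one n
    · calc Jp n x ≤ lb n := this.2
      _ ≤ rr n := (lb_lt n).le
      _ ≤ 3 * x := by linarith
  · rw [if_neg h]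
    have := Bp_mem ⟨(not_le.1 h).le, hn2⟩
    refine ⟨⟨by linarith [this.1], le_trans this.2 (bval_le_one n)⟩, ?_⟩
    calc Bp n x ≤ bval n := this.2
    _ ≤ rr n + rr (n+1) := bval_le n
    _ ≤ 3 * x := by
        have := rr_succ n; linarith

lemma fmap_mapsTo : MapsTo fmap (Icc (0:ℝ) 1) (Icc (0:ℝ) 1) := by
  intro x hx
  rcases eq_or_lt_of_le hx.1 with h | h
  · rw [← h, fmap_zero]; exact ⟨le_refl 0, zero_le_one⟩
  · exact (fmap_bounds h hx.2).1

lemma fmap_nonneg {x : ℝ} (hx : x ∈ Icc (0:ℝ) 1) : 0 ≤ fmap x := (fmap_mapsTo hx).1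

lemma fmap_contOn : ContinuousOn fmap (Icc 0 1) := by
  intro x hx
  rcases eq_or_lt_of_le hx.1 with h0 | h0
  · -- x = 0 : squeeze
    rw [← h0]
    have hb : ∀ y ∈ Icc (0:ℝ) 1, |fmap y| ≤ 3 * y := by
      intro y hy
      rcases eq_or_lt_of_le hy.1 with h | h
      · rw [← h, fmap_zero]; norm_num
      · have := fmap_bounds h hy.2
        rw [abs_of_nonneg this.1.1]
        · exact this.2
    have key : Filter.Tendsto fmap (nhdsWithin 0 (Icc (0:ℝ) 1)) (nhds 0) := by
      have h3 : Filter.Tendsto (fun y : ℝ => 3 * y) (nhdsWithin 0 (Icc (0:ℝ) 1)) (nhds 0) := by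
        have h4 : Filter.Tendsto (fun y : ℝ => 3 * y) (nhds 0) (nhds (3 * 0)) :=
          (continuous_const.mul continuous_id).tendsto 0
        rw [mul_zero] at h4
        exact h4.mono_left nhdsWithin_le_nhds
      exact squeeze_zero_norm' (Filter.eventually_iff_exists_mem.2 ⟨Icc 0 1, self_mem_nhdsWithin,
        fun y hy => by rw [Real.norm_eq_abs]; exact hb y hy⟩) h3
    show ContinuousWithinAt fmap (Icc 0 1) 0
    rw [ContinuousWithinAt, fmap_zero]
    exact key
  rcases eq_or_lt_of_le hx.2 with h1 | h1
  · -- x = 1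
    subst h1
    have hmem : Ioc (rr 1) 1 ∈ nhdsWithin (1:ℝ) (Icc (0:ℝ) 1) := by
      apply mem_nhdsWithin.2
      refine ⟨Ioi (rr 1), isOpen_Ioi, by rw [rr]; norm_num, ?_⟩
      rintro y ⟨hy1, hy2⟩
      exact ⟨hy1, hy2.2⟩
    have heq : fmap =ᶠ[nhdsWithin (1:ℝ) (Icc (0:ℝ) 1)] piece 0 :=
      Filter.eventuallyEq_of_mem hmem
        (fun y hy => fmap_eq_piece hy.1 (by rw [rr_zero]; exact hy.2))
    exact ((piece_cont 0).continuousWithinAt).congr_of_eventuallyEq heq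
      (fmap_eq_piece (by rw [rr]; norm_num) (by rw [rr_zero]))
  · -- interior point
    obtain ⟨n, hn1, hn2⟩ := exists_region h0 hx.2
    rcases eq_or_lt_of_le hn2 with he | he
    · -- x = rr n with n ≥ 1 (since x < 1 = rr 0)
      cases n with
      | zero => rw [rr_zero] at he; exact absurd he h1.ne
      | succ m =>
        rw [he]
        exact (cont_at_boundary m).continuousWithinAt
    · exact (cont_at_interior hn1 he).continuousWithinAt

lemma trapped {f : ℝ → ℝ} {x : ℝ} {m : ℕ} (hm : 1 ≤ m) (hper : f^[m] x = x)
    {K : Set ℝ} (hinv : ∀ y ∈ K, f y ∈ K) {k : ℕ} (hk : f^[k] x ∈ K) : x ∈ K := by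
  obtain ⟨j, hj⟩ : ∃ j, k ≤ j * m := ⟨k, Nat.le_mul_of_pos_right k hm⟩
  have hiter : ∀ j, f^[j*m] x = x := by
    intro j
    induction j with
    | zero => simp
    | succ j ihj =>
      have h : (j+1)*m = m + j*m := by ring
      rw [h, Function.iterate_add_apply, ihj, hper]
  have hKiter : ∀ t, f^[t] (f^[k] x) ∈ K := by
    intro t
    induction t with
    | zero => simpa
    | succ t ih => rw [Function.iterate_succ_apply']; exact hinv _ ih
  have h2 := hKiter (j*m - k)
  rw [← Function.iterate_add_apply, Nat.sub_add_cancel hj, hiter j] at h2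
  exact h2

lemma Jset_invar (n : ℕ) : ∀ x ∈ Icc (rr (n+1)) (lb n), fmap x ∈ Icc (rr (n+1)) (lb n) := by
  intro x hx
  have hp := rr_pos (n+2)
  set y := (x - rr (n+1)) / rr (n+2) with hydef
  have hy : y ∈ Icc (0:ℝ) 1 := by
    constructor
    · exact div_nonneg (by linarith [hx.1]) hp.le
    · rw [hydef, div_le_one hp]
      have := hx.2; rw [lb] at this; linarith
  have hx' : x = rr (n+1) + rr (n+2) * y := by
    rw [hydef]; field_simp; ring
  rw [hx', fmap_conj n hy]
  have hg := gmap_mapsTo n hy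
  constructor
  · nlinarith [hg.1]
  · rw [lb]; nlinarith [hg.2]

lemma fmap_one : fmap 1 = 1 := by
  have h1 : rr 1 < 1 := by rw [rr]; norm_num
  rw [fmap_eq_piece h1 (le_of_eq rr_zero.symm), piece]
  rw [if_neg (by rw [lb, rr, rr]; norm_num)]
  rw [Bp, lb]
  have e0 : bval 0 = 1 := rfl
  have e1 : rr 1 = 1/2 := by rw [rr]; norm_num
  have e2 : rr 2 = 1/4 := by rw [rr]; norm_num
  rw [e0, e1, e2]
  norm_num

lemma fmap_buffer {n : ℕ} {y : ℝ} (hy : y ∈ Icc (lb n) (rr n)) : fmap y = Bp n y := by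
  have h1 : rr (n+1) < y := lt_of_lt_of_le (lb_gt n) hy.1
  rw [fmap_eq_piece h1 hy.2, piece]
  rcases eq_or_lt_of_le hy.1 with h | h
  · rw [if_pos (le_of_eq h.symm), ← h, Jp_lb, Bp_lb]
  · rw [if_neg (not_le.2 h)]

lemma Bp_diff (n : ℕ) (u v : ℝ) :
    Bp n u - Bp n v = (bval n - rr (n+1)) / rr (n+2) * (u - v) := by
  rw [Bp, Bp]
  field_simp
  ring

lemma buffer_slope (n : ℕ) : 2 ≤ (bval n - rr (n+1)) / rr (n+2) := by
  rw [le_div_iff₀ (rr_pos (n+2))]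
  have h1 := bval_ge n
  have h2 := rr_succ n
  have h3 := rr_succ (n+1)
  linarith

lemma buffer_haff (n : ℕ) : ∀ u ∈ Icc (lb n) (rr n), ∀ v ∈ Icc (lb n) (rr n),
    2 * |u - v| ≤ |fmap u - fmap v| := by
  intro u hu v hv
  rw [fmap_buffer hu, fmap_buffer hv, Bp_diff, abs_mul]
  have h1 := buffer_slope n
  have h2 : |(bval n - rr (n+1)) / rr (n+2)| = (bval n - rr (n+1)) / rr (n+2) :=
    abs_of_nonneg (by linarith)
  rw [h2]
  nlinarith [abs_nonneg (u - v)]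

lemma buffer_fix_unique (n : ℕ) {u v : ℝ} (hu : u ∈ Icc (lb n) (rr n)) (hfu : fmap u = u)
    (hv : v ∈ Icc (lb n) (rr n)) (hfv : fmap v = v) : u = v := by
  have h := buffer_haff n u hu v hv
  rw [hfu, hfv] at h
  have h2 : |u - v| ≤ 0 := by linarith
  have h3 := abs_nonneg (u - v)
  have := abs_eq_zero.1 (le_antisymm h2 h3)
  linarith

/-- classification of periodic points of the global map. -/
lemma fmap_classify : ∀ x ∈ periodicPts fmap (Icc 0 1),
    x = 0 ∨ (∃ n y, y ∈ periodicPts (gmap n) (Icc 0 1) ∧ x = rr (n+1) + rr (n+2) * y)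
      ∨ (∃ n, x ∈ Ioc (lb n) (rr n) ∧ fmap x = x) := by
  rintro x ⟨hxI, m, hm, hper⟩
  rcases eq_or_lt_of_le hxI.1 with h0 | h0
  · left; exact h0.symm
  obtain ⟨n, hn1, hn2⟩ := exists_region h0 hxI.2
  have hp := rr_pos (n+2)
  by_cases hJ : x ≤ lb n
  · right; left
    set y := (x - rr (n+1)) / rr (n+2) with hydef
    have hyI : y ∈ Icc (0:ℝ) 1 := by
      constructor
      · exact div_nonneg (by linarith) hp.le
      · rw [hydef, div_le_one hp]
        rw [lb] at hJ; linarith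
    have hx' : x = rr (n+1) + rr (n+2) * y := by rw [hydef]; field_simp; ring
    have hgper : (gmap n)^[m] y = y := by
      have h := fmap_conj_iter n hyI m
      rw [← hx', hper] at h
      have h2 : rr (n+2) * (gmap n)^[m] y = rr (n+2) * y := by
        rw [hx'] at h
        linarith [h]
      exact mul_left_cancel₀ hp.ne' h2
    exact ⟨n, y, ⟨hyI, m, hm, hgper⟩, hx'⟩
  push_neg at hJ
  rcases eq_or_lt_of_le hn2 with he | he
  · -- x = rr n : endpoint
    cases n with
    | zero =>
      right; right
      refine ⟨0, ⟨hJ, hn2⟩, ?_⟩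
      rw [he, rr_zero, fmap_one]
    | succ k =>
      right; left
      refine ⟨k, 0, zero_per k, ?_⟩
      rw [he, mul_zero, add_zero]
  · -- x in the open buffer
    right; right
    have hxIoo : x ∈ Ioo (lb n) (rr n) := ⟨hJ, he⟩
    have hnotJ : ∀ k m', fmap^[k] x ∉ Icc (rr (m'+1)) (lb m') := by
      intro k m' hk
      have hxJ : x ∈ Icc (rr (m'+1)) (lb m') := trapped hm hper (Jset_invar m') hk
      rcases lt_trichotomy m' n with h | h | h
      · have := rr_mono (show m'+1 ≤ n by omega)
        linarith [hxJ.1, hxIoo.2]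
      · subst h
        linarith [hxJ.2, hxIoo.1]
      · have h1 : lb m' < lb n := by
          rw [lb, lb]
          have := rr_mono (show n+2 ≤ m'+1 by omega)
          have := rr_mono (show n+3 ≤ m'+2 by omega)
          have := rr_lt (n+1)
          have := rr_lt (n+2)
          linarith
        linarith [hxJ.2, hxIoo.1]
    have hnot1 : ∀ k, fmap^[k] x ≠ 1 := by
      intro k hk
      have hfix1 : ∀ y ∈ ({1}:Set ℝ), fmap y ∈ ({1}:Set ℝ) := by
        rintro y rfl
        rw [fmap_one]; rfl
      have : x ∈ ({1}:Set ℝ) := trapped hm hper hfix1 (by rw [hk]; rfl)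
      rw [mem_singleton_iff] at this
      have : x < 1 := lt_of_lt_of_le hxIoo.2 (rr_le_one n)
      linarith [this]
    have horb : ∀ k, fmap^[k] x ∈ Ioo (lb n) (rr n) := by
      intro k
      induction k with
      | zero => simpa
      | succ k ih =>
        rw [Function.iterate_succ_apply']
        set y := fmap^[k] x with hydef
        have hBp := Bp_mem ⟨ih.1.le, ih.2.le⟩
        rw [← fmap_buffer ⟨ih.1.le, ih.2.le⟩] at hBp
        constructor
        · -- fmap y > lb n
          by_contra hle
          push_neg at hle
          exact hnotJ (k+1) n (by
            rw [Function.iterate_succ_apply']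
            exact ⟨hBp.1, hle⟩)
        · -- fmap y < rr n
          cases n with
          | zero =>
            have h1 : fmap y ≤ 1 := le_trans hBp.2 (bval_le_one 0)
            have h2 : fmap y ≠ 1 := by
              intro hcontra
              exact hnot1 (k+1) (by rw [Function.iterate_succ_apply']; exact hcontra)
            rw [rr_zero]
            exact lt_of_le_of_ne h1 h2
          | succ j =>
            have h1 : fmap y ≤ lb j := by
              have := bval_le (j+1)
              have h2 : rr (j+1) + rr (j+2) = lb j := rfl
              calc fmap y ≤ bval (j+1) := hBp.2
              _ ≤ rr (j+1) + rr (j+2) := bval_le (j+1)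
              _ = lb j := rfl
            by_contra hge
            push_neg at hge
            exact hnotJ (k+1) j (by
              rw [Function.iterate_succ_apply']
              exact ⟨hge, h1⟩)
    have hfix : fmap x = x :=
      exp_fixed (buffer_haff n) (fun k => ⟨(horb k).1.le, (horb k).2.le⟩) hm hper
    exact ⟨n, ⟨hxIoo.1, hxIoo.2.le⟩, hfix⟩

/-- minimal periods transfer through the scaling conjugacy. -/
lemma minPeriod_conj {n : ℕ} {y : ℝ} (hy : y ∈ periodicPts (gmap n) (Icc 0 1)) :
    Function.minimalPeriod fmap (rr (n+1) + rr (n+2) * y)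
      = Function.minimalPeriod (gmap n) y := by
  obtain ⟨hyI, m0, hm0, hp0⟩ := hy
  have hp := rr_pos (n+2)
  have hiff : ∀ t, fmap^[t] (rr (n+1) + rr (n+2) * y) = rr (n+1) + rr (n+2) * y
      ↔ (gmap n)^[t] y = y := by
    intro t
    rw [fmap_conj_iter n hyI t]
    constructor
    · intro h
      exact mul_left_cancel₀ hp.ne' (by linarith [h])
    · intro h
      rw [h]
  have hyP : y ∈ Function.periodicPts (gmap n) := ⟨m0, by omega, hp0⟩
  set m := Function.minimalPeriod (gmap n) y with hm
  have hmpos : 0 < m := Function.minimalPeriod_pos_of_mem_periodicPts hyP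
  have hPf : Function.IsPeriodicPt fmap m (rr (n+1) + rr (n+2) * y) :=
    (hiff m).2 Function.iterate_minimalPeriod
  set m' := Function.minimalPeriod fmap (rr (n+1) + rr (n+2) * y) with hm'
  have hm'pos : 0 < m' := hPf.minimalPeriod_pos hmpos
  have h1 : m' ∣ m := hPf.minimalPeriod_dvd
  have hPg : Function.IsPeriodicPt (gmap n) m' y :=
    (hiff m').1 Function.iterate_minimalPeriod
  have h2 : m ∣ m' := hPg.minimalPeriod_dvd
  exact Nat.dvd_antisymm h1 h2

lemma S_subset_Icc : periodicPts fmap (Icc 0 1) ⊆ Icc (0:ℝ) 1 := fun _ h => h.1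

lemma rr_mem_S (n : ℕ) : rr (n+1) ∈ periodicPts fmap (Icc 0 1) := by
  have h := fmap_conj_iter n (⟨le_refl 0, zero_le_one⟩ : (0:ℝ) ∈ Icc (0:ℝ) 1) (2^n)
  have h0 : (gmap n)^[2^n] 0 = 0 := by
    have h1 := Function.iterate_minimalPeriod (f := gmap n) (x := 0)
    rwa [minPeriod_zero n] at h1
  rw [mul_zero, add_zero, h0, mul_zero, add_zero] at h
  exact ⟨⟨(rr_pos (n+1)).le, rr_le_one _⟩, 2^n, Nat.one_le_two_pow, h⟩

lemma minP_rr (n : ℕ) : Function.minimalPeriod fmap (rr (n+1)) = 2^n := by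
  have h := minPeriod_conj (zero_per n)
  rw [mul_zero, add_zero] at h
  rw [h, minPeriod_zero]

lemma zero_mem_S : (0:ℝ) ∈ periodicPts fmap (Icc 0 1) :=
  ⟨⟨le_refl 0, zero_le_one⟩, 1, le_refl 1, by rw [Function.iterate_one, fmap_zero]⟩

lemma fmap_periodSet : periodSet fmap (Icc 0 1) = {n : ℕ | ∃ k : ℕ, n = 2 ^ k} := by
  ext n
  constructor
  · rintro ⟨hn1, x, hxI, hmin⟩
    have hxS : x ∈ periodicPts fmap (Icc 0 1) := by
      refine ⟨hxI, n, hn1, ?_⟩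
      rw [← hmin]
      exact Function.iterate_minimalPeriod
    rcases fmap_classify x hxS with h0 | ⟨n', y, hy, rfl⟩ | ⟨n', _, hfix⟩
    · refine ⟨0, ?_⟩
      rw [← hmin, h0, pow_zero, Function.minimalPeriod_eq_one_iff_isFixedPt]
      exact fmap_zero
    · obtain ⟨k, hk⟩ := per_pow n' y hy
      exact ⟨k, by rw [← hmin, minPeriod_conj hy, hk]⟩
    · refine ⟨0, ?_⟩
      rw [← hmin, pow_zero, Function.minimalPeriod_eq_one_iff_isFixedPt]
      exact hfix
  · rintro ⟨k, rfl⟩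
    exact ⟨Nat.one_le_two_pow, rr (k+1), ⟨(rr_pos (k+1)).le, rr_le_one _⟩, minP_rr k⟩

lemma acc_finite {N : ℕ} :
    (periodicPts fmap (Icc 0 1) ∩ Ioi (rr N)).Finite := by
  set T : Set ℝ :=
    (⋃ n ∈ Finset.range N, (fun y => rr (n+1) + rr (n+2) * y) '' periodicPts (gmap n) (Icc 0 1))
      ∪ (⋃ n ∈ Finset.range N, {z | z ∈ Ioc (lb n) (rr n) ∧ fmap z = z}) with hT
  have hTfin : T.Finite := by
    apply Set.Finite.union
    · apply Set.Finite.biUnion (Finset.range N).finite_toSet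
      intro n _
      exact (per_finite n).image _
    · apply Set.Finite.biUnion (Finset.range N).finite_toSet
      intro n _
      apply Set.Subsingleton.finite
      rintro u ⟨hu, hfu⟩ v ⟨hv, hfv⟩
      exact buffer_fix_unique n ⟨hu.1.le, hu.2⟩ hfu ⟨hv.1.le, hv.2⟩ hfv
  apply hTfin.subset
  rintro x ⟨hxS, hxgt⟩
  have hrrN : 0 < rr N := rr_pos N
  rcases fmap_classify x hxS with h0 | ⟨n, y, hy, rfl⟩ | ⟨n, hmem, hfix⟩
  · exfalso; rw [h0] at hxgt; exact absurd hxgt (not_lt.2 hrrN.le)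
  · left
    have hyI := hy.1
    have hle : rr (n+1) + rr (n+2) * y ≤ lb n := by
      rw [lb]; nlinarith [hyI.2, rr_pos (n+2)]
    have hlt : rr N < rr n := by
      calc rr N < rr (n+1) + rr (n+2) * y := hxgt
      _ ≤ lb n := hle
      _ < rr n := lb_lt n
    have hnN : n < N := by
      by_contra hge
      exact absurd (rr_mono (not_lt.1 hge)) (not_le.2 hlt)
    exact Set.mem_biUnion (Finset.mem_coe.2 (Finset.mem_range.2 hnN)) ⟨y, hy, rfl⟩
  · right
    have hlt : rr N < rr n := lt_of_lt_of_le hxgt hmem.2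
    have hnN : n < N := by
      by_contra hge
      exact absurd (rr_mono (not_lt.1 hge)) (not_le.2 hlt)
    exact Set.mem_biUnion (Finset.mem_coe.2 (Finset.mem_range.2 hnN)) ⟨hmem, hfix⟩

lemma acc_eq_zero : {x : ℝ | AccPt x (Filter.principal (periodicPts fmap (Icc 0 1)))} = {0} := by
  ext x
  simp only [Set.mem_setOf_eq, Set.mem_singleton_iff]
  constructor
  · intro hAcc
    by_contra hne
    rcases lt_or_gt_of_ne hne with hlt | hgt
    · -- x < 0
      obtain ⟨y, hy, -⟩ := accPt_iff_nhds.1 hAcc (Iio 0) (Iio_mem_nhds hlt)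
      exact absurd (S_subset_Icc hy.2).1 (not_le.2 hy.1)
    · -- x > 0
      obtain ⟨N, hN⟩ := exists_rr hgt
      have hfin := acc_finite (N := N+1)
      have hclosed : ((periodicPts fmap (Icc 0 1) ∩ Ioi (rr (N+1))) \ {x}).Finite :=
        hfin.diff
      set U : Set ℝ := Ioi (rr (N+1)) \ ((periodicPts fmap (Icc 0 1) ∩ Ioi (rr (N+1))) \ {x})
        with hU
      have hUnhds : U ∈ nhds x := by
        rw [hU]
        apply IsOpen.mem_nhds
        · exact isOpen_Ioi.sdiff hclosed.isClosed
        · constructor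
          · exact hN
          · intro hmem
            exact hmem.2 rfl
      obtain ⟨y, hy, hyne⟩ := accPt_iff_nhds.1 hAcc U hUnhds
      apply hy.1.2
      exact ⟨⟨hy.2, hy.1.1⟩, hyne⟩
  · rintro rfl
    rw [accPt_iff_nhds]
    intro U hU
    obtain ⟨ε, hε, hball⟩ := Metric.mem_nhds_iff.1 hU
    obtain ⟨n, hn⟩ := exists_rr hε
    refine ⟨rr (n+1), ⟨?_, rr_mem_S n⟩, (rr_pos (n+1)).ne'⟩
    apply hball
    rw [Metric.mem_ball, Real.dist_eq, sub_zero, abs_of_pos (rr_pos (n+1))]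
    exact hn

end


/-- There is a continuous map of `[0,1]` whose set of periods is `{2^n : n ∈ ℕ}`
and whose set of accumulation points of periodic points is a single point, which is
moreover periodic.  Hence Lemma 1 fails without piecewise monotonicity. -/
theorem exists_continuous_map_periods_pow_two_acc_singleton_periodic :
    ∃ f : ℝ → ℝ, ContinuousOn f (Set.Icc (0:ℝ) 1) ∧
      Set.MapsTo f (Set.Icc (0:ℝ) 1) (Set.Icc (0:ℝ) 1) ∧
      periodSet f (Set.Icc (0:ℝ) 1) = {n | ∃ k : ℕ, n = 2 ^ k} ∧
      ∃ x₀ : ℝ,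
        {x | AccPt x (Filter.principal (periodicPts f (Set.Icc (0:ℝ) 1)))} = {x₀} ∧
        x₀ ∈ periodicPts f (Set.Icc (0:ℝ) 1) := by
  exact ⟨fmap, fmap_contOn, fmap_mapsTo, fmap_periodSet, 0, acc_eq_zero, zero_mem_S⟩
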